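/- Let I ⊆ ℝ be an open interval and let w : I → ℝ be three times continuously differentiable, satisfying w(u) e^{w(u)} = −e^{−u} and −1 < w(u) < −1/4 for all u ∈ I (i.e. w is a branch of the Lambert W-function evaluated at −e^{−u}). Define A = −(1/4 + w)(1 + w)⁻⁴ on I. Then: (i) A(u) > 0 for all u ∈ I; (ii) A satisfies 5 (A'')² − 4 A' A''' + 16 A (A')² = 0 on I; and (iii) the functions f₁ = (−(1 + w)/w)^{1/2} and f₂ = (−(1 + w) w)^{1/2} are well defined on I and satisfy f'' + A f = 0 on I. -/

import Mathlib

noncomputable section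

lemma stmt15_wderiv (I : Set ℝ) (hIopen : IsOpen I) (w : ℝ → ℝ) (hw : ContDiffOn ℝ 3 w I)
    (hW : ∀ u ∈ I, w u * Real.exp (w u) = -Real.exp (-u))
    (hrange : ∀ u ∈ I, -1 < w u ∧ w u < -(1 / 4)) :
    ∀ u ∈ I, HasDerivAt w (-(w u) / (1 + w u)) u := by
  intro u hu
  have h1 : (0:ℝ) < 1 + w u := by linarith [(hrange u hu).1]
  have hne : (1 : ℝ) + w u ≠ 0 := ne_of_gt h1
  have hdiff : DifferentiableAt ℝ w u :=
    (hw.contDiffAt (hIopen.mem_nhds hu)).differentiableAt (by norm_num)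
  have hd : HasDerivAt w (deriv w u) u := hdiff.hasDerivAt
  have hexp : HasDerivAt (fun v => Real.exp (w v)) (Real.exp (w u) * deriv w u) u :=
    (Real.hasDerivAt_exp (w u)).comp u hd
  have hnegexp : HasDerivAt (fun v => Real.exp (-v)) (Real.exp (-u) * (-1)) u :=
    (Real.hasDerivAt_exp (-u)).comp u (hasDerivAt_neg u)
  have hF : HasDerivAt (fun v => w v * Real.exp (w v) + Real.exp (-v))
      (deriv w u * Real.exp (w u) + w u * (Real.exp (w u) * deriv w u) + Real.exp (-u) * (-1)) u :=
    (hd.mul hexp).add hnegexp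
  have hF0 : (fun v => w v * Real.exp (w v) + Real.exp (-v)) =ᶠ[nhds u] (fun _ => (0:ℝ)) := by
    filter_upwards [hIopen.mem_nhds hu] with v hv
    rw [hW v hv]; ring
  have hF0' : HasDerivAt (fun v => w v * Real.exp (w v) + Real.exp (-v)) 0 u :=
    (hasDerivAt_const u (0:ℝ)).congr_of_eventuallyEq hF0
  have heq := hF.unique hF0'
  have hWu := hW u hu
  have hkey : (deriv w u * (1 + w u) + w u) * Real.exp (w u) = 0 := by
    linear_combination heq + hWu
  have hEne : Real.exp (w u) ≠ 0 := (Real.exp_pos _).ne'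
  have h2 : deriv w u * (1 + w u) + w u = 0 := by
    rcases mul_eq_zero.1 hkey with h | h
    · exact h
    · exact absurd h hEne
  have : deriv w u = -(w u) / (1 + w u) := by
    field_simp
    linarith
  rw [← this]; exact hd

lemma stmt15_hA1 (w : ℝ → ℝ) (u : ℝ) (hd : HasDerivAt w (-(w u) / (1 + w u)) u)
    (hne : (1:ℝ) + w u ≠ 0) :
    HasDerivAt (fun v => -(1 / 4 + w v) / (1 + w v) ^ 4) (-3 * (w u) ^ 2 / (1 + w u) ^ 6) u := by
  have hnum : HasDerivAt (fun v => -(1 / 4 + w v)) (-(0 + -(w u) / (1 + w u))) u :=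
    ((hasDerivAt_const u (1/4:ℝ)).add hd).neg
  have hden : HasDerivAt (fun v => (1 + w v) ^ 4)
      ((4:ℕ) * (1 + w u) ^ (4 - 1) * (0 + -(w u) / (1 + w u))) u :=
    ((hasDerivAt_const u (1:ℝ)).add hd).pow 4
  have := hnum.div hden (pow_ne_zero 4 hne)
  refine this.congr_deriv ?_
  field_simp
  ring

lemma stmt15_hA2 (w : ℝ → ℝ) (u : ℝ) (hd : HasDerivAt w (-(w u) / (1 + w u)) u)
    (hne : (1:ℝ) + w u ≠ 0) :
    HasDerivAt (fun v => -3 * (w v) ^ 2 / (1 + w v) ^ 6)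
      ((6 * (w u) ^ 2 - 12 * (w u) ^ 3) / (1 + w u) ^ 8) u := by
  have hnum : HasDerivAt (fun v => -3 * (w v) ^ 2)
      (-3 * ((2:ℕ) * (w u) ^ (2 - 1) * (-(w u) / (1 + w u)))) u := (hd.pow 2).const_mul (-3)
  have hden : HasDerivAt (fun v => (1 + w v) ^ 6)
      ((6:ℕ) * (1 + w u) ^ (6 - 1) * (0 + -(w u) / (1 + w u))) u :=
    ((hasDerivAt_const u (1:ℝ)).add hd).pow 6
  have := hnum.div hden (pow_ne_zero 6 hne)
  refine this.congr_deriv ?_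
  field_simp
  ring

lemma stmt15_hA3 (w : ℝ → ℝ) (u : ℝ) (hd : HasDerivAt w (-(w u) / (1 + w u)) u)
    (hne : (1:ℝ) + w u ≠ 0) :
    HasDerivAt (fun v => (6 * (w v) ^ 2 - 12 * (w v) ^ 3) / (1 + w v) ^ 8)
      ((-12 * (w u) ^ 2 + 72 * (w u) ^ 3 - 60 * (w u) ^ 4) / (1 + w u) ^ 10) u := by
  have hnum : HasDerivAt (fun v => 6 * (w v) ^ 2 - 12 * (w v) ^ 3)
      (6 * ((2:ℕ) * (w u) ^ (2 - 1) * (-(w u) / (1 + w u)))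
        - 12 * ((3:ℕ) * (w u) ^ (3 - 1) * (-(w u) / (1 + w u)))) u :=
    ((hd.pow 2).const_mul 6).sub ((hd.pow 3).const_mul 12)
  have hden : HasDerivAt (fun v => (1 + w v) ^ 8)
      ((8:ℕ) * (1 + w u) ^ (8 - 1) * (0 + -(w u) / (1 + w u))) u :=
    ((hasDerivAt_const u (1:ℝ)).add hd).pow 8
  have := hnum.div hden (pow_ne_zero 8 hne)
  refine this.congr_deriv ?_
  field_simp
  ring

lemma stmt15_hH1 (w : ℝ → ℝ) (u : ℝ) (hd : HasDerivAt w (-(w u) / (1 + w u)) u)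
    (hne : (1:ℝ) + w u ≠ 0) (hw0 : w u ≠ 0) :
    HasDerivAt (fun v => -(1 + w v) / w v) (-1 / (w u * (1 + w u))) u := by
  have hnum : HasDerivAt (fun v => -(1 + w v)) (-(0 + -(w u) / (1 + w u))) u :=
    ((hasDerivAt_const u (1:ℝ)).add hd).neg
  have := hnum.div hd hw0
  refine this.congr_deriv ?_
  field_simp
  ring

lemma stmt15_hB1 (w : ℝ → ℝ) (u : ℝ) (hd : HasDerivAt w (-(w u) / (1 + w u)) u)
    (hne : (1:ℝ) + w u ≠ 0) (hw0 : w u ≠ 0) :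
    HasDerivAt (fun v => -1 / (w v * (1 + w v)))
      (-(2 * w u + 1) / (w u * (1 + w u) ^ 3)) u := by
  have hden : HasDerivAt (fun v => w v * (1 + w v))
      (-(w u) / (1 + w u) * (1 + w u) + w u * (0 + -(w u) / (1 + w u))) u :=
    hd.mul ((hasDerivAt_const u (1:ℝ)).add hd)
  have := (hasDerivAt_const u (-1:ℝ)).div hden (mul_ne_zero hw0 hne)
  refine this.congr_deriv ?_
  field_simp
  ring

lemma stmt15_hH2 (w : ℝ → ℝ) (u : ℝ) (hd : HasDerivAt w (-(w u) / (1 + w u)) u)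
    (hne : (1:ℝ) + w u ≠ 0) :
    HasDerivAt (fun v => -(1 + w v) * w v) (w u * (1 + 2 * w u) / (1 + w u)) u := by
  have hnum : HasDerivAt (fun v => -(1 + w v)) (-(0 + -(w u) / (1 + w u))) u :=
    ((hasDerivAt_const u (1:ℝ)).add hd).neg
  have := hnum.mul hd
  refine this.congr_deriv ?_
  field_simp
  ring

lemma stmt15_hC1 (w : ℝ → ℝ) (u : ℝ) (hd : HasDerivAt w (-(w u) / (1 + w u)) u)
    (hne : (1:ℝ) + w u ≠ 0) :
    HasDerivAt (fun v => w v * (1 + 2 * w v) / (1 + w v))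
      (-(w u) * (1 + 4 * w u + 2 * (w u) ^ 2) / (1 + w u) ^ 3) u := by
  have hnum : HasDerivAt (fun v => w v * (1 + 2 * w v))
      (-(w u) / (1 + w u) * (1 + 2 * w u)
        + w u * (0 + 2 * (-(w u) / (1 + w u)))) u :=
    hd.mul ((hasDerivAt_const u (1:ℝ)).add (hd.const_mul 2))
  have hden : HasDerivAt (fun v => 1 + w v) (0 + -(w u) / (1 + w u)) u :=
    (hasDerivAt_const u (1:ℝ)).add hd
  have := hnum.div hden hne
  refine this.congr_deriv ?_
  field_simp
  ring

lemma stmt15_ode2 (I : Set ℝ) (hIopen : IsOpen I) (h p q A : ℝ → ℝ)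
    (hpos : ∀ u ∈ I, 0 < h u)
    (hp : ∀ u ∈ I, HasDerivAt h (p u) u)
    (hq : ∀ u ∈ I, HasDerivAt p (q u) u)
    (hkey : ∀ u ∈ I, 2 * q u * h u - (p u) ^ 2 + 4 * A u * (h u) ^ 2 = 0) :
    ∀ u ∈ I, deriv (deriv (fun v => Real.sqrt (h v))) u + A u * Real.sqrt (h u) = 0 := by
  set f : ℝ → ℝ := fun v => Real.sqrt (h v) with hf
  set F' : ℝ → ℝ := fun v => p v / (2 * Real.sqrt (h v)) with hF'
  set F'' : ℝ → ℝ := fun v => (2 * q v * h v - (p v) ^ 2) / (4 * h v * Real.sqrt (h v)) with hF''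
  have hsp : ∀ u ∈ I, 0 < Real.sqrt (h u) := fun u hu => Real.sqrt_pos.2 (hpos u hu)
  have hf' : ∀ u ∈ I, HasDerivAt f (F' u) u := by
    intro u hu
    have := (Real.hasDerivAt_sqrt (hpos u hu).ne').comp u (hp u hu)
    refine this.congr_deriv ?_
    simp only [hF']
    ring
  have hf'' : ∀ u ∈ I, HasDerivAt F' (F'' u) u := by
    intro u hu
    have hs2 : Real.sqrt (h u) ^ 2 = h u := Real.sq_sqrt (hpos u hu).le
    have hden : HasDerivAt (fun v => 2 * Real.sqrt (h v))
        (2 * (1 / (2 * Real.sqrt (h u)) * p u)) u :=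
      ((Real.hasDerivAt_sqrt (hpos u hu).ne').comp u (hp u hu)).const_mul 2
    have hdne : 2 * Real.sqrt (h u) ≠ 0 := mul_ne_zero two_ne_zero (hsp u hu).ne'
    have := (hq u hu).div hden hdne
    refine this.congr_deriv ?_
    simp only [hF'']
    set s := Real.sqrt (h u) with hs
    have hsne : s ≠ 0 := (hsp u hu).ne'
    rw [← hs2]
    field_simp
    ring
  intro u hu
  have hd1 : deriv f =ᶠ[nhds u] F' := by
    filter_upwards [hIopen.mem_nhds hu] with v hv
    exact (hf' v hv).deriv
  have hdd : deriv (deriv f) u = F'' u := by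
    rw [hd1.deriv_eq]
    exact (hf'' u hu).deriv
  rw [hdd]
  have key := hkey u hu
  have hs2 : Real.sqrt (h u) ^ 2 = h u := Real.sq_sqrt (hpos u hu).le
  have h2 : 2 * q u * h u - (p u) ^ 2 = -(4 * A u * (h u) ^ 2) := by linarith
  simp only [hF'']
  rw [h2]
  set s := Real.sqrt (h u) with hs
  have hsne : s ≠ 0 := (hsp u hu).ne'
  rw [← hs2]
  field_simp
  ring

/-- Lambert-W solution of `5 (A'')² - 4 A' A''' + 16 A (A')² = 0`.
If `w` is a branch of the Lambert W-function at `-e^{-u}` with `-1 < w < -1/4` on an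
open interval `I`, then `A = -(1/4 + w)(1 + w)⁻⁴` is positive, satisfies the equation,
and `f₁ = (-(1+w)/w)^{1/2}`, `f₂ = (-(1+w)w)^{1/2}` are well defined and satisfy
`f'' + A f = 0` on `I`. -/
theorem stmt15 (I : Set ℝ) (hIopen : IsOpen I) (hIconn : I.OrdConnected)
    (w : ℝ → ℝ) (hw : ContDiffOn ℝ 3 w I)
    (hW : ∀ u ∈ I, w u * Real.exp (w u) = -Real.exp (-u))
    (hrange : ∀ u ∈ I, -1 < w u ∧ w u < -(1 / 4)) :
    let A : ℝ → ℝ := fun u => -(1 / 4 + w u) / (1 + w u) ^ 4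
    let f₁ : ℝ → ℝ := fun u => Real.sqrt (-(1 + w u) / w u)
    let f₂ : ℝ → ℝ := fun u => Real.sqrt (-(1 + w u) * w u)
    (∀ u ∈ I, 0 < A u) ∧
    (∀ u ∈ I,
      5 * (deriv (deriv A) u) ^ 2 - 4 * deriv A u * deriv (deriv (deriv A)) u
        + 16 * A u * (deriv A u) ^ 2 = 0) ∧
    (∀ u ∈ I, 0 < -(1 + w u) / w u ∧ 0 < -(1 + w u) * w u) ∧
    (∀ u ∈ I, deriv (deriv f₁) u + A u * f₁ u = 0) ∧
    (∀ u ∈ I, deriv (deriv f₂) u + A u * f₂ u = 0) := by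
  intro A f₁ f₂
  have hwd : ∀ u ∈ I, HasDerivAt w (-(w u) / (1 + w u)) u :=
    stmt15_wderiv I hIopen w hw hW hrange
  have hpos1 : ∀ u ∈ I, (0:ℝ) < 1 + w u := fun u hu => by linarith [(hrange u hu).1]
  have hne1 : ∀ u ∈ I, (1:ℝ) + w u ≠ 0 := fun u hu => (hpos1 u hu).ne'
  have hwneg : ∀ u ∈ I, w u < 0 := fun u hu => by linarith [(hrange u hu).2]
  have hw0 : ∀ u ∈ I, w u ≠ 0 := fun u hu => (hwneg u hu).ne
  refine ⟨?_, ?_, ?_, ?_, ?_⟩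
  · -- positivity of A
    intro u hu
    simp only [A]
    apply div_pos
    · have := (hrange u hu).2; linarith
    · exact pow_pos (hpos1 u hu) 4
  · -- the ODE for A
    intro u hu
    simp only [A]
    have hD1 : ∀ v ∈ I, deriv (fun x => -(1 / 4 + w x) / (1 + w x) ^ 4) v
        = -3 * (w v) ^ 2 / (1 + w v) ^ 6 :=
      fun v hv => (stmt15_hA1 w v (hwd v hv) (hne1 v hv)).deriv
    have hD2 : ∀ v ∈ I, deriv (deriv (fun x => -(1 / 4 + w x) / (1 + w x) ^ 4)) v
        = (6 * (w v) ^ 2 - 12 * (w v) ^ 3) / (1 + w v) ^ 8 := by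
      intro v hv
      have hev : deriv (fun x => -(1 / 4 + w x) / (1 + w x) ^ 4)
          =ᶠ[nhds v] (fun x => -3 * (w x) ^ 2 / (1 + w x) ^ 6) := by
        filter_upwards [hIopen.mem_nhds hv] with x hx
        exact hD1 x hx
      rw [hev.deriv_eq]
      exact (stmt15_hA2 w v (hwd v hv) (hne1 v hv)).deriv
    have hD3 : ∀ v ∈ I, deriv (deriv (deriv (fun x => -(1 / 4 + w x) / (1 + w x) ^ 4))) v
        = (-12 * (w v) ^ 2 + 72 * (w v) ^ 3 - 60 * (w v) ^ 4) / (1 + w v) ^ 10 := by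
      intro v hv
      have hev : deriv (deriv (fun x => -(1 / 4 + w x) / (1 + w x) ^ 4))
          =ᶠ[nhds v] (fun x => (6 * (w x) ^ 2 - 12 * (w x) ^ 3) / (1 + w x) ^ 8) := by
        filter_upwards [hIopen.mem_nhds hv] with x hx
        exact hD2 x hx
      rw [hev.deriv_eq]
      exact (stmt15_hA3 w v (hwd v hv) (hne1 v hv)).deriv
    rw [hD1 u hu, hD2 u hu, hD3 u hu]
    have hne := hne1 u hu
    field_simp
    ring
  · -- positivity for f₁, f₂
    intro u hu
    constructor
    · exact div_pos_of_neg_of_neg (by linarith [hpos1 u hu]) (hwneg u hu)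
    · exact mul_pos_of_neg_of_neg (by linarith [hpos1 u hu]) (hwneg u hu)
  · -- f₁'' + A f₁ = 0
    simp only [f₁, A]
    exact stmt15_ode2 I hIopen (fun v => -(1 + w v) / w v)
      (fun v => -1 / (w v * (1 + w v)))
      (fun v => -(2 * w v + 1) / (w v * (1 + w v) ^ 3))
      (fun v => -(1 / 4 + w v) / (1 + w v) ^ 4)
      (fun u hu => div_pos_of_neg_of_neg (by linarith [hpos1 u hu]) (hwneg u hu))
      (fun u hu => stmt15_hH1 w u (hwd u hu) (hne1 u hu) (hw0 u hu))
      (fun u hu => stmt15_hB1 w u (hwd u hu) (hne1 u hu) (hw0 u hu))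
      (by
        intro u hu
        have hne := hne1 u hu
        have h0 := hw0 u hu
        field_simp
        ring)
  · -- f₂'' + A f₂ = 0
    simp only [f₂, A]
    exact stmt15_ode2 I hIopen (fun v => -(1 + w v) * w v)
      (fun v => w v * (1 + 2 * w v) / (1 + w v))
      (fun v => -(w v) * (1 + 4 * w v + 2 * (w v) ^ 2) / (1 + w v) ^ 3)
      (fun v => -(1 / 4 + w v) / (1 + w v) ^ 4)
      (fun u hu => mul_pos_of_neg_of_neg (by linarith [hpos1 u hu]) (hwneg u hu))
      (fun u hu => stmt15_hH2 w u (hwd u hu) (hne1 u hu))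
      (fun u hu => stmt15_hC1 w u (hwd u hu) (hne1 u hu))
      (by
        intro u hu
        have hne := hne1 u hu
        field_simp
        ring)

end
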